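/- Relative nonoscillation does not depend on the choice of solutions: if u₀, v₀ are nontrivial real solutions of (τ₀-λ₀)u = 0 and u₁, v₁ nontrivial real solutions of (τ₁-λ₁)u = 0, then for all x ∈ (a,b): N(u₀,u₁)(x) - 4 ≤ N(v₀,v₁)(x) ≤ N(u₀,u₁)(x) + 2. In particular limsup_{x→b} N(u₀,u₁)(x) and liminf_{x→b} N(u₀,u₁)(x) are finite if and only if the corresponding limits for N(v₀,v₁) are finite. -/

import Mathlib

open Real Set Filter

lemma ceil_const_of_ne_int {g : ℝ → ℝ} {a x : ℝ} (hax : a ≤ x)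
    (hg : ContinuousOn g (Icc a x)) (h : ∀ t ∈ Icc a x, ∀ n : ℤ, g t ≠ n) :
    ⌈g x⌉ = ⌈g a⌉ := by
  by_contra h'
  rcases lt_or_gt_of_ne h' with hlt | hgt
  · have h1 : g x < (⌈g x⌉ : ℝ) :=
      lt_of_le_of_ne (Int.le_ceil _) (h x ⟨hax, le_refl x⟩ _)
    have h2 : (⌈g x⌉ : ℝ) < g a := by
      have : (⌈g x⌉ : ℝ) ≤ (⌈g a⌉ : ℝ) - 1 := by exact_mod_cast Int.le_sub_one_of_lt hlt
      have := Int.ceil_lt_add_one (g a)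
      linarith
    obtain ⟨t, ht, hgt'⟩ := intermediate_value_Icc' hax hg ⟨h1.le, h2.le⟩
    exact h t ht _ hgt'
  · have h1 : g a < (⌈g a⌉ : ℝ) :=
      lt_of_le_of_ne (Int.le_ceil _) (h a ⟨le_refl a, hax⟩ _)
    have h2 : (⌈g a⌉ : ℝ) < g x := by
      have : (⌈g a⌉ : ℝ) ≤ (⌈g x⌉ : ℝ) - 1 := by exact_mod_cast Int.le_sub_one_of_lt hgt
      have := Int.ceil_lt_add_one (g x)
      linarith
    obtain ⟨t, ht, hgt'⟩ := intermediate_value_Icc hax hg ⟨h1.le, h2.le⟩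
    exact h t ht _ hgt'

lemma const_of_int_valued {g : ℝ → ℝ} {a x : ℝ} (hax : a ≤ x)
    (hg : ContinuousOn g (Icc a x)) (h : ∀ t ∈ Icc a x, ∃ n : ℤ, g t = n) :
    g x = g a := by
  obtain ⟨m, hm⟩ := h a ⟨le_refl a, hax⟩
  obtain ⟨n, hn⟩ := h x ⟨hax, le_refl x⟩
  by_contra h'
  rcases lt_or_gt_of_ne h' with hlt | hgt
  · -- g x < g a, so n < m, take value m - 1/2
    have hnm : (n : ℝ) < m := by rw [← hm, ← hn]; exact hlt
    have hnm' : n + 1 ≤ m := by exact_mod_cast Int.add_one_le_of_lt (by exact_mod_cast hnm)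
    have : ((n : ℝ) + 1/2) ∈ Icc (g x) (g a) := by
      rw [hm, hn]
      constructor
      · linarith
      · have : (n : ℝ) + 1 ≤ m := by exact_mod_cast hnm'
        linarith
    obtain ⟨t, ht, hgt'⟩ := intermediate_value_Icc' hax hg this
    obtain ⟨k, hk⟩ := h t ht
    rw [hk] at hgt'
    have : (2 * k : ℝ) = 2 * n + 1 := by linarith
    have : (2 * k : ℤ) = 2 * n + 1 := by exact_mod_cast this
    omega
  · have hnm : (m : ℝ) < n := by rw [← hm, ← hn]; exact hgt
    have hnm' : m + 1 ≤ n := by exact_mod_cast Int.add_one_le_of_lt (by exact_mod_cast hnm)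
    have : ((m : ℝ) + 1/2) ∈ Icc (g a) (g x) := by
      rw [hm, hn]
      constructor
      · linarith
      · have : (m : ℝ) + 1 ≤ n := by exact_mod_cast hnm'
        linarith
    obtain ⟨t, ht, hgt'⟩ := intermediate_value_Icc hax hg this
    obtain ⟨k, hk⟩ := h t ht
    rw [hk] at hgt'
    have : (2 * k : ℝ) = 2 * m + 1 := by linarith
    have : (2 * k : ℤ) = 2 * m + 1 := by exact_mod_cast this
    omega

lemma prufer_key (a b : ℝ) (p q u v pu pv ρu ρv θu θv : ℝ → ℝ)
    (hu : ∀ x ∈ Ico a b, HasDerivAt u (pu x / p x) x)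
    (hpu : ∀ x ∈ Ico a b, HasDerivAt pu (q x * u x) x)
    (hv : ∀ x ∈ Ico a b, HasDerivAt v (pv x / p x) x)
    (hpv : ∀ x ∈ Ico a b, HasDerivAt pv (q x * v x) x)
    (hρu : ∀ x ∈ Ico a b, 0 < ρu x) (hρv : ∀ x ∈ Ico a b, 0 < ρv x)
    (hsu : ∀ x ∈ Ico a b, u x = ρu x * Real.sin (θu x))
    (hcu : ∀ x ∈ Ico a b, pu x = ρu x * Real.cos (θu x))
    (hsv : ∀ x ∈ Ico a b, v x = ρv x * Real.sin (θv x))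
    (hcv : ∀ x ∈ Ico a b, pv x = ρv x * Real.cos (θv x))
    (hθu : ContinuousOn θu (Ico a b)) (hθv : ContinuousOn θv (Ico a b)) :
    ∀ x ∈ Ico a b, ⌊(θv a - θu a) / π⌋ ≤ ⌈(θv x - θu x) / π⌉ ∧
      ⌈(θv x - θu x) / π⌉ ≤ ⌊(θv a - θu a) / π⌋ + 1 := by
  intro x hx
  have hax : a ≤ x := hx.1
  have ha : a ∈ Ico a b := ⟨le_refl a, lt_of_le_of_lt hax hx.2⟩
  have hsub : Icc a x ⊆ Ico a b := fun t ht => ⟨ht.1, lt_of_le_of_lt ht.2 hx.2⟩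
  -- Wronskian is constant
  set W : ℝ → ℝ := fun t => u t * pv t - v t * pu t with hWdef
  have hWd : ∀ t ∈ Ico a b, HasDerivAt W 0 t := by
    intro t ht
    have h := ((hu t ht).mul (hpv t ht)).sub ((hv t ht).mul (hpu t ht))
    exact h.congr_deriv (by ring)
  have hWconst : W x = W a := by
    apply constant_of_has_deriv_right_zero
      (f := W) (a := a) (b := x)
      (fun t ht => ((hWd t (hsub ht)).continuousAt).continuousWithinAt)
      (fun t ht => ((hWd t (hsub ⟨ht.1, ht.2.le⟩)).hasDerivWithinAt))
    exact ⟨hax, le_refl x⟩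
  have hWval : ∀ t ∈ Ico a b, W t = ρu t * ρv t * Real.sin (θu t - θv t) := by
    intro t ht
    simp only [hWdef]
    rw [hsu t ht, hcu t ht, hsv t ht, hcv t ht, Real.sin_sub]
    ring
  have hWeq : ∀ t ∈ Icc a x, ρu t * ρv t * Real.sin (θu t - θv t)
      = ρu a * ρv a * Real.sin (θu a - θv a) := by
    intro t ht
    have hWconst' : W t = W a := by
      apply constant_of_has_deriv_right_zero
        (f := W) (a := a) (b := x)
        (fun s hs => ((hWd s (hsub hs)).continuousAt).continuousWithinAt)
        (fun s hs => ((hWd s (hsub ⟨hs.1, hs.2.le⟩)).hasDerivWithinAt))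
      exact ht
    rw [← hWval t (hsub ht), ← hWval a ha, hWconst']
  set g : ℝ → ℝ := fun t => (θv t - θu t) / π with hgdef
  have hgcont : ContinuousOn g (Icc a x) :=
    ((hθv.mono hsub).sub (hθu.mono hsub)).div_const π
  by_cases hs : Real.sin (θu a - θv a) = 0
  · -- integer-valued case
    have hint : ∀ t ∈ Icc a x, ∃ n : ℤ, g t = n := by
      intro t ht
      have h0 : Real.sin (θu t - θv t) = 0 := by
        have := hWeq t ht
        rw [hs, mul_zero] at this
        have h1 := (hρu t (hsub ht)).ne'
        have h2 := (hρv t (hsub ht)).ne'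
        exact (mul_eq_zero.mp this).resolve_left (mul_ne_zero h1 h2)
      have h0' : Real.sin (θv t - θu t) = 0 := by
        rw [show θv t - θu t = -(θu t - θv t) by ring, Real.sin_neg, h0, neg_zero]
      obtain ⟨n, hn⟩ := Real.sin_eq_zero_iff.mp h0'
      exact ⟨n, by simp only [hgdef]; rw [← hn]; field_simp⟩
    have hgx : g x = g a := const_of_int_valued hax hgcont hint
    obtain ⟨m, hm⟩ := hint a ⟨le_refl a, hax⟩
    have hcx : ⌈(θv x - θu x) / π⌉ = m := by
      rw [show (θv x - θu x) / π = g x from rfl, hgx, hm, Int.ceil_intCast]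
    have hfa : ⌊(θv a - θu a) / π⌋ = m := by
      rw [show (θv a - θu a) / π = g a from rfl, hm, Int.floor_intCast]
    omega
  · -- never-integer case
    have hnint : ∀ t ∈ Icc a x, ∀ n : ℤ, g t ≠ n := by
      intro t ht n hgn
      have hθeq : θv t - θu t = n * π := by
        have hπ := Real.pi_ne_zero
        simp only [hgdef] at hgn
        field_simp at hgn
        linarith
      have h0' : Real.sin (θv t - θu t) = 0 := by
        rw [hθeq]; exact Real.sin_int_mul_pi n
      have h0 : Real.sin (θu t - θv t) = 0 := by
        rw [show θu t - θv t = -(θv t - θu t) by ring, Real.sin_neg, h0', neg_zero]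
      have := hWeq t ht
      rw [h0, mul_zero] at this
      have h1 := (hρu a ha).ne'
      have h2 := (hρv a ha).ne'
      have : Real.sin (θu a - θv a) = 0 :=
        (mul_eq_zero.mp this.symm).resolve_left (mul_ne_zero h1 h2)
      exact hs this
    have hceil : ⌈g x⌉ = ⌈g a⌉ := ceil_const_of_ne_int hax hgcont hnint
    have hne : (⌊g a⌋ : ℝ) < g a :=
      lt_of_le_of_ne (Int.floor_le _) (fun h => hnint a ⟨le_refl a, hax⟩ ⌊g a⌋ h.symm)
    have h1 : ⌊g a⌋ + 1 ≤ ⌈g a⌉ := Int.lt_ceil.mpr hne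
    have h2 : ⌈g a⌉ ≤ ⌊g a⌋ + 1 := by
      apply Int.ceil_le.mpr
      push_cast
      exact (Int.lt_floor_add_one (g a)).le
    have e1 : ⌈(θv x - θu x) / π⌉ = ⌈g a⌉ := hceil
    have e2 : ⌈g a⌉ = ⌈(θv a - θu a) / π⌉ := rfl
    have e3 : ⌊g a⌋ = ⌊(θv a - θu a) / π⌋ := rfl
    omega

/-- Independence of relative (non)oscillation of the chosen solutions. Let
`u₀, v₀` be nontrivial real solutions of `(τ₀-λ₀)u = 0` and `u₁, v₁`
nontrivial real solutions of `(τ₁-λ₁)u = 0`, with quasi-derivatives and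
Prüfer representations as usual. With
`N(u,v)(x) = ⌈(θᵥ(x)-θᵤ(x))/π⌉ - ⌊(θᵥ(a)-θᵤ(a))/π⌋ - 1`, one has
`N(u₀,u₁)(x) - 4 ≤ N(v₀,v₁)(x) ≤ N(u₀,u₁)(x) + 2` for all `x ∈ (a,b)`;
in particular the limsup and liminf of `N(u₀,u₁)` as `x → b⁻` are finite
(eventually bounded above resp. below) iff the same holds for `N(v₀,v₁)`. -/
theorem stmt_13 (a b lam₀ lam₁ : ℝ) (hab : a < b)
    (p₀ q₀ r₀ p₁ q₁ r₁ : ℝ → ℝ)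
    (u₀ v₀ u₁ v₁ pu₀ pv₀ pu₁ pv₁ ρu₀ ρv₀ ρu₁ ρv₁ θu₀ θv₀ θu₁ θv₁ : ℝ → ℝ)
    (hp₀ : ∀ x ∈ Ico a b, 0 < p₀ x) (hp₁ : ∀ x ∈ Ico a b, 0 < p₁ x)
    (hr₀ : ∀ x ∈ Ico a b, 0 < r₀ x) (hr₁ : ∀ x ∈ Ico a b, 0 < r₁ x)
    (hu₀ : ∀ x ∈ Ico a b, HasDerivAt u₀ (pu₀ x / p₀ x) x)
    (hpu₀ : ∀ x ∈ Ico a b, HasDerivAt pu₀ ((q₀ x - lam₀ * r₀ x) * u₀ x) x)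
    (hv₀ : ∀ x ∈ Ico a b, HasDerivAt v₀ (pv₀ x / p₀ x) x)
    (hpv₀ : ∀ x ∈ Ico a b, HasDerivAt pv₀ ((q₀ x - lam₀ * r₀ x) * v₀ x) x)
    (hu₁ : ∀ x ∈ Ico a b, HasDerivAt u₁ (pu₁ x / p₁ x) x)
    (hpu₁ : ∀ x ∈ Ico a b, HasDerivAt pu₁ ((q₁ x - lam₁ * r₁ x) * u₁ x) x)
    (hv₁ : ∀ x ∈ Ico a b, HasDerivAt v₁ (pv₁ x / p₁ x) x)
    (hpv₁ : ∀ x ∈ Ico a b, HasDerivAt pv₁ ((q₁ x - lam₁ * r₁ x) * v₁ x) x)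
    (hρu₀ : ∀ x ∈ Ico a b, 0 < ρu₀ x) (hρv₀ : ∀ x ∈ Ico a b, 0 < ρv₀ x)
    (hρu₁ : ∀ x ∈ Ico a b, 0 < ρu₁ x) (hρv₁ : ∀ x ∈ Ico a b, 0 < ρv₁ x)
    (hsu₀ : ∀ x ∈ Ico a b, u₀ x = ρu₀ x * Real.sin (θu₀ x))
    (hcu₀ : ∀ x ∈ Ico a b, pu₀ x = ρu₀ x * Real.cos (θu₀ x))
    (hsv₀ : ∀ x ∈ Ico a b, v₀ x = ρv₀ x * Real.sin (θv₀ x))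
    (hcv₀ : ∀ x ∈ Ico a b, pv₀ x = ρv₀ x * Real.cos (θv₀ x))
    (hsu₁ : ∀ x ∈ Ico a b, u₁ x = ρu₁ x * Real.sin (θu₁ x))
    (hcu₁ : ∀ x ∈ Ico a b, pu₁ x = ρu₁ x * Real.cos (θu₁ x))
    (hsv₁ : ∀ x ∈ Ico a b, v₁ x = ρv₁ x * Real.sin (θv₁ x))
    (hcv₁ : ∀ x ∈ Ico a b, pv₁ x = ρv₁ x * Real.cos (θv₁ x))
    (hθu₀ : ContinuousOn θu₀ (Ico a b)) (hθv₀ : ContinuousOn θv₀ (Ico a b))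
    (hθu₁ : ContinuousOn θu₁ (Ico a b)) (hθv₁ : ContinuousOn θv₁ (Ico a b)) :
    (∀ x ∈ Ioo a b,
      (⌈(θu₁ x - θu₀ x) / π⌉ - ⌊(θu₁ a - θu₀ a) / π⌋ - 1) - 4
        ≤ ⌈(θv₁ x - θv₀ x) / π⌉ - ⌊(θv₁ a - θv₀ a) / π⌋ - 1 ∧
      ⌈(θv₁ x - θv₀ x) / π⌉ - ⌊(θv₁ a - θv₀ a) / π⌋ - 1
        ≤ (⌈(θu₁ x - θu₀ x) / π⌉ - ⌊(θu₁ a - θu₀ a) / π⌋ - 1) + 2) ∧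
    ((IsBoundedUnder (· ≤ ·) (nhdsWithin b (Iio b))
          (fun x => ⌈(θu₁ x - θu₀ x) / π⌉ - ⌊(θu₁ a - θu₀ a) / π⌋ - 1) ∧
      IsBoundedUnder (· ≥ ·) (nhdsWithin b (Iio b))
          (fun x => ⌈(θu₁ x - θu₀ x) / π⌉ - ⌊(θu₁ a - θu₀ a) / π⌋ - 1)) ↔
     (IsBoundedUnder (· ≤ ·) (nhdsWithin b (Iio b))
          (fun x => ⌈(θv₁ x - θv₀ x) / π⌉ - ⌊(θv₁ a - θv₀ a) / π⌋ - 1) ∧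
      IsBoundedUnder (· ≥ ·) (nhdsWithin b (Iio b))
          (fun x => ⌈(θv₁ x - θv₀ x) / π⌉ - ⌊(θv₁ a - θv₀ a) / π⌋ - 1))) := by
  
  have K1 := prufer_key a b p₁ (fun x => q₁ x - lam₁ * r₁ x) u₁ v₁ pu₁ pv₁ ρu₁ ρv₁ θu₁ θv₁
    hu₁ hpu₁ hv₁ hpv₁ hρu₁ hρv₁ hsu₁ hcu₁ hsv₁ hcv₁ hθu₁ hθv₁
  have K2 := prufer_key a b p₀ (fun x => q₀ x - lam₀ * r₀ x) v₀ u₀ pv₀ pu₀ ρv₀ ρu₀ θv₀ θu₀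
    hv₀ hpv₀ hu₀ hpu₀ hρv₀ hρu₀ hsv₀ hcv₀ hsu₀ hcu₀ hθv₀ hθu₀
  have K3 := prufer_key a b p₁ (fun x => q₁ x - lam₁ * r₁ x) v₁ u₁ pv₁ pu₁ ρv₁ ρu₁ θv₁ θu₁
    hv₁ hpv₁ hu₁ hpu₁ hρv₁ hρu₁ hsv₁ hcv₁ hsu₁ hcu₁ hθv₁ hθu₁
  have K4 := prufer_key a b p₀ (fun x => q₀ x - lam₀ * r₀ x) u₀ v₀ pu₀ pv₀ ρu₀ ρv₀ θu₀ θv₀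
    hu₀ hpu₀ hv₀ hpv₀ hρu₀ hρv₀ hsu₀ hcu₀ hsv₀ hcv₀ hθu₀ hθv₀
  have main : ∀ x ∈ Ioo a b,
      (⌈(θu₁ x - θu₀ x) / π⌉ - ⌊(θu₁ a - θu₀ a) / π⌋ - 1) - 4
        ≤ ⌈(θv₁ x - θv₀ x) / π⌉ - ⌊(θv₁ a - θv₀ a) / π⌋ - 1 ∧
      ⌈(θv₁ x - θv₀ x) / π⌉ - ⌊(θv₁ a - θv₀ a) / π⌋ - 1
        ≤ (⌈(θu₁ x - θu₀ x) / π⌉ - ⌊(θu₁ a - θu₀ a) / π⌋ - 1) + 2 := by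
    intro x hx
    have hx' : x ∈ Ico a b := ⟨hx.1.le, hx.2⟩
    obtain ⟨k1l, k1r⟩ := K1 x hx'
    obtain ⟨k2l, k2r⟩ := K2 x hx'
    obtain ⟨k3l, k3r⟩ := K3 x hx'
    obtain ⟨k4l, k4r⟩ := K4 x hx'
    have c1 : ⌈(θv₁ x - θv₀ x) / π⌉ ≤ ⌈(θv₁ x - θu₁ x) / π⌉ +
        (⌈(θu₁ x - θu₀ x) / π⌉ + ⌈(θu₀ x - θv₀ x) / π⌉) := by
      rw [show (θv₁ x - θv₀ x) / π
        = (θv₁ x - θu₁ x) / π + ((θu₁ x - θu₀ x) / π + (θu₀ x - θv₀ x) / π) by ring]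
      exact (Int.ceil_add_le _ _).trans (add_le_add_right (Int.ceil_add_le _ _) _)
    have f1 : ⌊(θv₁ a - θu₁ a) / π⌋ + (⌊(θu₁ a - θu₀ a) / π⌋ + ⌊(θu₀ a - θv₀ a) / π⌋)
        ≤ ⌊(θv₁ a - θv₀ a) / π⌋ := by
      rw [show (θv₁ a - θv₀ a) / π
        = (θv₁ a - θu₁ a) / π + ((θu₁ a - θu₀ a) / π + (θu₀ a - θv₀ a) / π) by ring]
      refine Int.le_floor.mpr ?_
      push_cast
      have := Int.floor_le ((θv₁ a - θu₁ a) / π)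
      have := Int.floor_le ((θu₁ a - θu₀ a) / π)
      have := Int.floor_le ((θu₀ a - θv₀ a) / π)
      linarith
    have c2 : ⌈(θu₁ x - θu₀ x) / π⌉ ≤ ⌈(θu₁ x - θv₁ x) / π⌉ +
        (⌈(θv₁ x - θv₀ x) / π⌉ + ⌈(θv₀ x - θu₀ x) / π⌉) := by
      rw [show (θu₁ x - θu₀ x) / π
        = (θu₁ x - θv₁ x) / π + ((θv₁ x - θv₀ x) / π + (θv₀ x - θu₀ x) / π) by ring]
      exact (Int.ceil_add_le _ _).trans (add_le_add_right (Int.ceil_add_le _ _) _)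
    have f2 : ⌊(θu₁ a - θv₁ a) / π⌋ + (⌊(θv₁ a - θv₀ a) / π⌋ + ⌊(θv₀ a - θu₀ a) / π⌋)
        ≤ ⌊(θu₁ a - θu₀ a) / π⌋ := by
      rw [show (θu₁ a - θu₀ a) / π
        = (θu₁ a - θv₁ a) / π + ((θv₁ a - θv₀ a) / π + (θv₀ a - θu₀ a) / π) by ring]
      refine Int.le_floor.mpr ?_
      push_cast
      have := Int.floor_le ((θu₁ a - θv₁ a) / π)
      have := Int.floor_le ((θv₁ a - θv₀ a) / π)
      have := Int.floor_le ((θv₀ a - θu₀ a) / π)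
      linarith
    omega
  refine ⟨main, ?_⟩
  have hmem : Ioo a b ∈ nhdsWithin b (Iio b) := by
    rw [← Ioi_inter_Iio]
    exact inter_mem (mem_nhdsWithin_of_mem_nhds (Ioi_mem_nhds hab)) self_mem_nhdsWithin
  constructor
  · rintro ⟨h1, h2⟩
    constructor
    · obtain ⟨c, hc⟩ := h1
      refine ⟨c + 2, ?_⟩
      rw [eventually_map] at hc ⊢
      filter_upwards [hc, eventually_mem_set.mpr hmem] with x h hmx
      have := (main x hmx).2
      omega
    · obtain ⟨c, hc⟩ := h2
      refine ⟨c - 4, ?_⟩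
      rw [eventually_map] at hc ⊢
      filter_upwards [hc, eventually_mem_set.mpr hmem] with x h hmx
      have := (main x hmx).1
      simp only [ge_iff_le] at h ⊢
      omega
  · rintro ⟨h1, h2⟩
    constructor
    · obtain ⟨c, hc⟩ := h1
      refine ⟨c + 4, ?_⟩
      rw [eventually_map] at hc ⊢
      filter_upwards [hc, eventually_mem_set.mpr hmem] with x h hmx
      have := (main x hmx).1
      omega
    · obtain ⟨c, hc⟩ := h2
      refine ⟨c - 2, ?_⟩
      rw [eventually_map] at hc ⊢
      filter_upwards [hc, eventually_mem_set.mpr hmem] with x h hmx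
      have := (main x hmx).2
      simp only [ge_iff_le] at h ⊢
      omega
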